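/- For every t ∈ ℂ with t ≠ 0, the Lie algebra on ℂ³ with brackets [f1,f3] = f1, [f2,f3] = f1 − f2, [f1,f2] = t·f3 is isomorphic to sl(2,ℂ). -/
import Mathlib

def br (t : ℂ) (u v : Fin 3 → ℂ) : Fin 3 → ℂ :=
  fun k =>
    if k = 0 then (u 0 * v 2 - u 2 * v 0) + (u 1 * v 2 - u 2 * v 1)
    else if k = 1 then -(u 1 * v 2 - u 2 * v 1)
    else t * (u 0 * v 1 - u 1 * v 0)

noncomputable def gm (t : ℂ) (u : Fin 3 → ℂ) : Matrix (Fin 2) (Fin 2) ℂ :=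
  !![u 2 / 2, u 1; -t/2 * u 0 - t/4 * u 1, -(u 2 / 2)]

lemma mem_sl_iff (X : Matrix (Fin 2) (Fin 2) ℂ) :
    X ∈ LieAlgebra.SpecialLinear.sl (Fin 2) ℂ ↔ X 0 0 + X 1 1 = 0 := by
  rw [show (X ∈ LieAlgebra.SpecialLinear.sl (Fin 2) ℂ) ↔ Matrix.trace X = 0 from Iff.rfl]
  simp [Matrix.trace, Matrix.diag, Fin.sum_univ_two]

lemma gm_mem (t : ℂ) (u : Fin 3 → ℂ) : gm t u ∈ LieAlgebra.SpecialLinear.sl (Fin 2) ℂ := by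
  rw [mem_sl_iff]; simp [gm]

lemma gm_add (t : ℂ) (u v : Fin 3 → ℂ) : gm t (u + v) = gm t u + gm t v := by
  ext i j
  fin_cases i <;> fin_cases j <;> simp [gm, Matrix.add_apply] <;> ring

lemma gm_smul (t c : ℂ) (u : Fin 3 → ℂ) : gm t (c • u) = c • gm t u := by
  ext i j
  fin_cases i <;> fin_cases j <;> simp [gm, Matrix.smul_apply] <;> ring

noncomputable def inv' (t : ℂ) (X : Matrix (Fin 2) (Fin 2) ℂ) : Fin 3 → ℂ :=
  ![-2 * X 1 0 / t - X 0 1 / 2, X 0 1, 2 * X 0 0]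

lemma gm_left (t : ℂ) (ht : t ≠ 0) (u : Fin 3 → ℂ) : inv' t (gm t u) = u := by
  funext k
  fin_cases k <;> simp [inv', gm] <;> field_simp <;> ring

lemma gm_right (t : ℂ) (ht : t ≠ 0) (X : Matrix (Fin 2) (Fin 2) ℂ)
    (hX : X 1 1 = -X 0 0) : gm t (inv' t X) = X := by
  ext i j
  fin_cases i <;> fin_cases j <;> simp [inv', gm, hX] <;> field_simp <;> ring

lemma gm_br (t : ℂ) (u v : Fin 3 → ℂ) :
    gm t (br t u v) = gm t u * gm t v - gm t v * gm t u := by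
  ext i j
  fin_cases i <;> fin_cases j <;>
    simp [gm, br, Matrix.mul_apply, Fin.sum_univ_two, Matrix.sub_apply] <;> ring

/-- For every `t ≠ 0` the resulting Lie algebra is isomorphic to `sl(2,ℂ)`. -/
theorem iso_sl2_of_t_ne_zero (t : ℂ) (ht : t ≠ 0) :
    ∃ g : (Fin 3 → ℂ) ≃ₗ[ℂ] ↥(LieAlgebra.SpecialLinear.sl (Fin 2) ℂ),
      ∀ u v, g (br t u v) = ⁅g u, g v⁆ := by
  refine ⟨{
    toFun := fun u => ⟨gm t u, gm_mem t u⟩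
    invFun := fun M => inv' t M.1
    map_add' := fun u v => Subtype.ext (gm_add t u v)
    map_smul' := fun c u => Subtype.ext (gm_smul t c u)
    left_inv := fun u => gm_left t ht u
    right_inv := by
      intro M
      refine Subtype.ext (gm_right t ht M.1 ?_)
      have h := (mem_sl_iff M.1).mp M.2
      linear_combination h
  }, ?_⟩
  intro u v
  exact Subtype.ext ((gm_br t u v).trans (LieAlgebra.SpecialLinear.sl_bracket
    (Fin 2) ℂ ⟨gm t u, gm_mem t u⟩ ⟨gm t v, gm_mem t v⟩).symm)
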